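/- Let G be a finite DAG, S ⊆ V a prefix subset, and I ⊆ V any subset. Define Des(v, I) for v ∈ I as the set of vertices u ∉ I such that there exists a directed path from v to u intersecting I only at v. Then the union of Des(v, I) over v ∈ I \ S equals Des(I \ S) \ (I \ S), where Des(A) is the set of strict descendants of vertices in A. -/

import Mathlib

open Relation

/-- Undirected adjacency induced by a directed edge relation. -/
def Adjacent {V : Type*} (E : V → V → Prop) (a b : V) : Prop := E a b ∨ E b a

/-- `x` is a collider on the path (vertex list) `p`: both neighboring edges point into `x`. -/
def IsCollider {V : Type*} (E : V → V → Prop) (p : List V) (x : V) : Prop :=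
  ∃ l1 a b l2, p = l1 ++ a :: x :: b :: l2 ∧ E a x ∧ E b x

/-- A path (vertex list) is active given a conditioning set `C`:
every collider is in `C` or has a descendant in `C`, and no non-collider is in `C`. -/
def ActivePath {V : Type*} (E : V → V → Prop) (C : Set V) (p : List V) : Prop :=
  (∀ x ∈ p, IsCollider E p x → ∃ d, ReflTransGen E x d ∧ d ∈ C) ∧
  (∀ x ∈ p, ¬ IsCollider E p x → x ∉ C)

/-- `p` is a path between `u` and `v`: consecutively adjacent, distinct vertices. -/
def IsPathBetween {V : Type*} (E : V → V → Prop) (u v : V) (p : List V) : Prop :=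
  p.Chain' (Adjacent E) ∧ p.Nodup ∧ p.head? = some u ∧ p.getLast? = some v

/-- `u` and `v` are d-connected given `C`. -/
def DConn {V : Type*} (E : V → V → Prop) (C : Set V) (u v : V) : Prop :=
  ∃ p, IsPathBetween E u v p ∧ ActivePath E C p

/-- `u` and `v` are d-separated given `C`. -/
def DSep {V : Type*} (E : V → V → Prop) (C : Set V) (u v : V) : Prop :=
  ¬ DConn E C u v

/-- `S` is a prefix (ancestrally closed) subset. -/
def IsPrefixSet {V : Type*} (E : V → V → Prop) (S : Set V) : Prop :=
  ∀ u v, E u v → v ∈ S → u ∈ S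

/-- Source vertices of the induced subgraph on `T`: vertices of `T` with no parent in `T`. -/
def srcOf {V : Type*} (E : V → V → Prop) (T : Set V) : Set V :=
  {v | v ∈ T ∧ ∀ u, E u v → u ∉ T}

/-- The edge relation is acyclic. -/
def Acyclic {V : Type*} (E : V → V → Prop) : Prop :=
  ∀ v, ¬ TransGen E v v

/-- `p` is a directed path from `u` to `v` (all edges forward). -/
def DirPath {V : Type*} (E : V → V → Prop) (u v : V) (p : List V) : Prop :=
  p.Chain' E ∧ p.head? = some u ∧ p.getLast? = some v

/-- `Des(v, I)`: vertices `u ∉ I` reachable from `v` by a directed path whose only vertex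
in `I` is `v`. -/
def DesAvoiding {V : Type*} (E : V → V → Prop) (I : Set V) (v : V) : Set V :=
  {u | u ∉ I ∧ ∃ p, DirPath E v u p ∧ ∀ x ∈ p, x ∈ I → x = v}

lemma dirPath_reflTransGen {V : Type*} {E : V → V → Prop} :
    ∀ (p : List V) (a u : V), DirPath E a u p → ReflTransGen E a u := by
  intro p
  induction p with
  | nil => intro a u h; simp [DirPath] at h
  | cons x t ih =>
    intro a u h
    obtain ⟨hc, hh, hl⟩ := h
    simp at hh; subst hh
    cases t with
    | nil => simp at hl; subst hl; exact ReflTransGen.refl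
    | cons y s =>
      replace hc := List.isChain_cons_cons.mp hc
      refine ReflTransGen.head hc.1 (ih y u ⟨hc.2, rfl, ?_⟩)
      simpa using hl

lemma prefix_closed {V : Type*} {E : V → V → Prop} {S : Set V}
    (hS : IsPrefixSet E S) {a u : V} (h : ReflTransGen E a u) (hu : u ∈ S) : a ∈ S := by
  induction h with
  | refl => exact hu
  | tail h1 h2 ih => exact ih (hS _ _ h2 hu)

lemma key_lemma {V : Type*} {E : V → V → Prop} {I : Set V} {b u : V}
    (h : ReflTransGen E b u) (hu : u ∉ I) :
    (∃ p, DirPath E b u p ∧ ∀ x ∈ p, x ∉ I) ∨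
    (∃ v ∈ I, ReflTransGen E b v ∧ u ∈ DesAvoiding E I v) := by
  induction h using ReflTransGen.head_induction_on with
  | refl =>
    left
    exact ⟨[u], ⟨List.isChain_singleton u, rfl, rfl⟩, by simpa using hu⟩
  | head hbc hcu ih =>
    rename_i b c
    rcases ih with ⟨q, ⟨hq1, hq2, hq3⟩, hq4⟩ | ⟨v, hv, hcv, hdes⟩
    · obtain ⟨t, rfl⟩ : ∃ t, q = c :: t := by
        cases q with
        | nil => simp at hq2
        | cons x t => simp at hq2; exact ⟨t, by rw [hq2]⟩
      by_cases hbI : b ∈ I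
      · right
        refine ⟨b, hbI, ReflTransGen.refl, hu, b :: c :: t,
          ⟨List.isChain_cons_cons.mpr ⟨hbc, hq1⟩, rfl, by simpa using hq3⟩, ?_⟩
        intro x hx hxI
        rcases List.mem_cons.mp hx with rfl | hx
        · rfl
        · exact absurd hxI (hq4 x hx)
      · left
        refine ⟨b :: c :: t,
          ⟨List.isChain_cons_cons.mpr ⟨hbc, hq1⟩, rfl, by simpa using hq3⟩, ?_⟩
        intro x hx
        rcases List.mem_cons.mp hx with rfl | hx
        · exact hbI
        · exact hq4 x hx
    · exact Or.inr ⟨v, hv, ReflTransGen.head hbc hcv, hdes⟩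

/-- `⋃_{v ∈ I \ S} Des(v, I) = Des(I \ S) \ (I \ S)`. -/
theorem union_desAvoiding_eq {V : Type*} [Fintype V] (E : V → V → Prop)
    (hacyc : Acyclic E) (S I : Set V) (hS : IsPrefixSet E S) :
    (⋃ v ∈ I \ S, DesAvoiding E I v)
      = {u | ∃ a ∈ I \ S, TransGen E a u} \ (I \ S) := by
  ext u
  simp only [Set.mem_iUnion, Set.mem_diff, Set.mem_setOf_eq, exists_prop]
  constructor
  · rintro ⟨v, ⟨hvI, hvS⟩, huI, p, hp, hpI⟩
    have hvu : ReflTransGen E v u := dirPath_reflTransGen p v u hp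
    have hne : v ≠ u := fun h => huI (h ▸ hvI)
    have htg : TransGen E v u := by
      rcases hvu.cases_head with rfl | ⟨c, hvc, hcu⟩
      · exact absurd rfl hne
      · exact TransGen.head' hvc hcu
    exact ⟨⟨v, ⟨hvI, hvS⟩, htg⟩, fun ⟨h1, _⟩ => huI h1⟩
  · rintro ⟨⟨a, ⟨haI, haS⟩, hau⟩, huIS⟩
    have huS : u ∉ S := fun h => haS (prefix_closed hS hau.to_reflTransGen h)
    have huI : u ∉ I := fun h => huIS ⟨h, huS⟩
    rcases key_lemma hau.to_reflTransGen huI with ⟨p, hp, hpI⟩ | ⟨v, hvI, hav, hdes⟩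
    · exfalso
      apply hpI a _ haI
      have := hp.2.1
      cases p with
      | nil => simp at this
      | cons x t => simp at this; simp [this]
    · refine ⟨v, ⟨hvI, fun h => haS (prefix_closed hS hav h)⟩, hdes⟩
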